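/- If W_ξ(c̄) < 0 for some threshold vector c̄ ∈ ℝ^m, then p(c̄) := c̄ + W_ξ(c̄)·(1,...,1) is a weak Pareto maximum of S(ξ). -/

import Mathlib

/-- Trajectory of the discrete-time control system `x_{k+1} = F_k(x_k, u_k, ω_k)`, `x_0 = ξ`. -/
def traj {X U W : Type*} (F : ℕ → X → U → W → X) (ξ : X) (u : ℕ → U) (w : ℕ → W) : ℕ → X
  | 0 => ξ
  | k + 1 => F k (traj F ξ u w k) (u k) (w k)

/-- `u` is admissible for `(ξ, c)`: for every scenario, the mixed and end-point
constraints hold (componentwise, thresholds `c`). -/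
def Adm {X U W : Type*} {m : ℕ} (N : ℕ) (F : ℕ → X → U → W → X) (Ω : ℕ → Set W)
    (g : ℕ → X → U → Fin m → ℝ) (θ : X → Fin m → ℝ) (ξ : X) (c : Fin m → ℝ)
    (u : ℕ → U) : Prop :=
  ∀ w : ℕ → W, (∀ k, w k ∈ Ω k) →
    (∀ k ≤ N, c ≤ g k (traj F ξ u w k) (u k)) ∧ c ≤ θ (traj F ξ u w (N + 1))

/-- The set of robust sustainable thresholds `S(ξ)`. -/
def SST {X U W : Type*} {m : ℕ} (N : ℕ) (F : ℕ → X → U → W → X) (Ω : ℕ → Set W)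
    (g : ℕ → X → U → Fin m → ℝ) (θ : X → Fin m → ℝ) (ξ : X) : Set (Fin m → ℝ) :=
  {c | ∃ u : ℕ → U, Adm N F Ω g θ ξ c u}


/-- The level-set cost `J^c(u) = inf_w min{ min_{k≤N} Φ^c_k(x_k,u_k), Θ^c(x_{N+1}) }`,
where `Φ^c_k(x,u) = min_i (g^k_i(x,u) - c_i)` and `Θ^c(x) = min_i (θ_i(x) - c_i)`. -/
noncomputable def Jfun {X U W : Type*} {m : ℕ} [NeZero m] (N : ℕ)
    (F : ℕ → X → U → W → X) (Ω : ℕ → Set W)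
    (g : ℕ → X → U → Fin m → ℝ) (θ : X → Fin m → ℝ) (ξ : X) (c : Fin m → ℝ)
    (u : ℕ → U) : ℝ :=
  ⨅ w : {w : ℕ → W // ∀ k, w k ∈ Ω k},
    min ((Finset.Icc 0 N).inf' (Finset.nonempty_Icc.2 (Nat.zero_le N))
          fun k => ⨅ i, (g k (traj F ξ u w.1 k) (u k) i - c i))
        (⨅ i, (θ (traj F ξ u w.1 (N + 1)) i - c i))

/-- The level-set value `W_ξ(c) = max_u J^c(u)`. -/
noncomputable def Wval {X U W : Type*} {m : ℕ} [NeZero m] (N : ℕ)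
    (F : ℕ → X → U → W → X) (Ω : ℕ → Set W)
    (g : ℕ → X → U → Fin m → ℝ) (θ : X → Fin m → ℝ) (ξ : X) (c : Fin m → ℝ) : ℝ :=
  sSup (Set.range (Jfun N F Ω g θ ξ c))

section Aux

variable {α : Type*} [TopologicalSpace α]

lemma usc_sub_const {f : α → ℝ} (hf : UpperSemicontinuous f) (c : ℝ) :
    UpperSemicontinuous fun x => f x - c := by
  intro x y hy
  have hy' : f x - c < y := hy
  have h1 : f x < y + c := by linarith
  filter_upwards [hf x (y + c) h1] with z hz
  show f z - c < y
  linarith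

lemma usc_min' {f g : α → ℝ} (hf : UpperSemicontinuous f) (hg : UpperSemicontinuous g) :
    UpperSemicontinuous fun x => min (f x) (g x) := by
  intro x y hy
  rcases min_lt_iff.1 hy with h | h
  · filter_upwards [hf x y h] with z hz
    exact min_lt_iff.2 (Or.inl hz)
  · filter_upwards [hg x y h] with z hz
    exact min_lt_iff.2 (Or.inr hz)

lemma usc_ciInf_fin {ι : Type*} [Finite ι] [Nonempty ι] {f : ι → α → ℝ}
    (hf : ∀ i, UpperSemicontinuous (f i)) :
    UpperSemicontinuous fun x => ⨅ i, f i x := by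
  intro x y hy
  obtain ⟨i, hi⟩ := exists_lt_of_ciInf_lt hy
  filter_upwards [hf i x y hi] with z hz
  exact lt_of_le_of_lt (ciInf_le ((Set.finite_range _).bddBelow) i) hz

lemma usc_inf' {ι : Type*} (s : Finset ι) (hs : s.Nonempty) {f : ι → α → ℝ}
    (hf : ∀ i ∈ s, UpperSemicontinuous (f i)) :
    UpperSemicontinuous fun x => s.inf' hs fun i => f i x := by
  intro x y hy
  rw [Finset.inf'_lt_iff] at hy
  obtain ⟨i, hi, hlt⟩ := hy
  filter_upwards [hf i hi x y hlt] with z hz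
  exact (Finset.inf'_lt_iff hs).2 ⟨i, hi, hz⟩

lemma usc_iInf_bdd {ι : Type*} [Nonempty ι] {f : ι → α → ℝ}
    (hf : ∀ i, UpperSemicontinuous (f i)) {M : ℝ} (hM : ∀ i x, M ≤ f i x) :
    UpperSemicontinuous fun x => ⨅ i, f i x := by
  intro x y hy
  obtain ⟨i, hi⟩ := exists_lt_of_ciInf_lt hy
  filter_upwards [hf i x y hi] with z hz
  refine lt_of_le_of_lt (ciInf_le ⟨M, ?_⟩ i) hz
  rintro _ ⟨j, rfl⟩
  exact hM j z

lemma exists_forall_ge_of_usc [CompactSpace α] [Nonempty α] {f : α → ℝ}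
    (hf : UpperSemicontinuous f) : ∃ x, ∀ y, f y ≤ f x := by
  by_contra h
  push_neg at h
  have hcover : (Set.univ : Set α) ⊆ ⋃ y, {z | f z < f y} := by
    intro x _
    obtain ⟨y, hy⟩ := h x
    exact Set.mem_iUnion.2 ⟨y, hy⟩
  obtain ⟨t, ht⟩ := isCompact_univ.elim_finite_subcover (fun y => {z | f z < f y})
    (fun y => hf.isOpen_preimage (f y)) hcover
  have htne : t.Nonempty := by
    rcases Finset.eq_empty_or_nonempty t with rfl | hne
    · obtain ⟨x⟩ := (inferInstance : Nonempty α)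
      simpa using ht (Set.mem_univ x)
    · exact hne
  obtain ⟨y₀, hy₀t, hmax⟩ := t.exists_max_image f htne
  obtain ⟨y, hyt, hlt⟩ := Set.mem_iUnion₂.1 (ht (Set.mem_univ y₀))
  exact absurd hlt (not_lt.2 (hmax y hyt))

end Aux

theorem stmt12 {X U W : Type*} [NormedAddCommGroup X] [NormedSpace ℝ X]
    [FiniteDimensional ℝ X] [MetricSpace U] [CompactSpace U] [Nonempty U]
    {m N : ℕ} [NeZero m] (F : ℕ → X → U → W → X) (Ω : ℕ → Set W)
    (hΩ : ∀ k, (Ω k).Nonempty)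
    (g : ℕ → X → U → Fin m → ℝ) (θ : X → Fin m → ℝ)
    (hF : ∀ k, ∀ ω ∈ Ω k, Continuous fun p : X × U => F k p.1 p.2 ω)
    (hg_usc : ∀ k i, UpperSemicontinuous fun p : X × U => g k p.1 p.2 i)
    (hg_bdd : ∀ k i, BddBelow (Set.range fun p : X × U => g k p.1 p.2 i))
    (hθ_usc : ∀ i, UpperSemicontinuous fun x => θ x i)
    (hθ_bdd : ∀ i, BddBelow (Set.range fun x => θ x i))
    (ξ : X)
    (cbar : Fin m → ℝ) (hneg : Wval N F Ω g θ ξ cbar < 0) :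
    (fun i => cbar i + Wval N F Ω g θ ξ cbar) ∈ SST N F Ω g θ ξ ∧
    ¬ ∃ c ∈ SST N F Ω g θ ξ, ∀ i,
      cbar i + Wval N F Ω g θ ξ cbar < c i := by
  classical
  haveI : Nonempty {w : ℕ → W // ∀ k, w k ∈ Ω k} :=
    ⟨⟨fun k => (hΩ k).choose, fun k => (hΩ k).choose_spec⟩⟩
  set φ : (ℕ → U) → ℝ := Jfun N F Ω g θ ξ cbar with hφ
  have hIcc : (Finset.Icc 0 N).Nonempty := Finset.nonempty_Icc.2 (Nat.zero_le N)
  -- the inner function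
  set h : (ℕ → U) → {w : ℕ → W // ∀ k, w k ∈ Ω k} → ℝ := fun u w =>
    min ((Finset.Icc 0 N).inf' hIcc
          fun k => ⨅ i, (g k (traj F ξ u w.1 k) (u k) i - cbar i))
        (⨅ i, (θ (traj F ξ u w.1 (N + 1)) i - cbar i)) with hh
  have hφ_eq : ∀ u, φ u = ⨅ w, h u w := fun u => rfl
  -- uniform lower bound
  set M : ℝ := min ((Finset.Icc 0 N).inf' hIcc fun k => ⨅ i, ((hg_bdd k i).choose - cbar i))
      (⨅ i, ((hθ_bdd i).choose - cbar i)) with hM_def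
  have hM : ∀ u w, M ≤ h u w := by
    intro u w
    refine le_min ?_ ?_
    · refine le_trans (min_le_left _ _) (Finset.le_inf' _ _ fun k hk => ?_)
      refine le_trans (Finset.inf'_le _ hk) (le_ciInf fun i => ?_)
      refine le_trans (ciInf_le ((Set.finite_range _).bddBelow) i) ?_
      have := (hg_bdd k i).choose_spec (Set.mem_range_self (traj F ξ u w.1 k, u k))
      simpa using sub_le_sub_right this (cbar i)
    · refine le_trans (min_le_right _ _) (le_ciInf fun i => ?_)
      refine le_trans (ciInf_le ((Set.finite_range _).bddBelow) i) ?_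
      have := (hθ_bdd i).choose_spec (Set.mem_range_self (traj F ξ u w.1 (N + 1)))
      simpa using sub_le_sub_right this (cbar i)
  have hbb : ∀ u, BddBelow (Set.range (h u)) := fun u =>
    ⟨M, by rintro _ ⟨w, rfl⟩; exact hM u w⟩
  -- continuity of trajectories in the control
  have htraj : ∀ (w : ℕ → W), (∀ k, w k ∈ Ω k) → ∀ k,
      Continuous fun u : ℕ → U => traj F ξ u w k := by
    intro w hw k
    induction k with
    | zero => exact continuous_const
    | succ k ih =>
      show Continuous fun u : ℕ → U => F k (traj F ξ u w k) (u k) (w k)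
      exact (hF k (w k) (hw k)).comp (ih.prodMk (continuous_apply k))
  -- upper semicontinuity of φ
  have hφ_usc : UpperSemicontinuous φ := by
    have : UpperSemicontinuous fun u => ⨅ w, h u w := by
      refine usc_iInf_bdd (fun w => ?_) (fun w u => hM u w)
      refine usc_min' ?_ ?_
      · refine usc_inf' _ hIcc fun k _ => ?_
        refine usc_ciInf_fin fun i => ?_
        exact usc_sub_const (UpperSemicontinuous.comp (hg_usc k i)
          ((htraj w.1 w.2 k).prodMk (continuous_apply k))) (cbar i)
      · refine usc_ciInf_fin fun i => ?_
        exact usc_sub_const (UpperSemicontinuous.comp (hθ_usc i) (htraj w.1 w.2 (N + 1))) (cbar i)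
    intro u
    simpa [hφ_eq] using this u
  -- attainment of the maximum
  obtain ⟨u₀, hu₀⟩ := exists_forall_ge_of_usc hφ_usc
  have hbdd : BddAbove (Set.range φ) := ⟨φ u₀, by rintro _ ⟨u, rfl⟩; exact hu₀ u⟩
  have hW_eq : Wval N F Ω g θ ξ cbar = φ u₀ := by
    refine le_antisymm (csSup_le (Set.range_nonempty _) ?_) (le_csSup hbdd ⟨u₀, rfl⟩)
    rintro _ ⟨u, rfl⟩; exact hu₀ u
  set Wv := Wval N F Ω g θ ξ cbar with hWv
  -- key: the optimal control satisfies all shifted constraints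
  have hkey : ∀ (w : ℕ → W) (hw : ∀ k, w k ∈ Ω k), Wv ≤ h u₀ ⟨w, hw⟩ := by
    intro w hw
    calc Wv = φ u₀ := hW_eq
    _ = ⨅ w', h u₀ w' := hφ_eq u₀
    _ ≤ h u₀ ⟨w, hw⟩ := ciInf_le (hbb u₀) _
  constructor
  · refine ⟨u₀, fun w hw => ⟨fun k hk => ?_, ?_⟩⟩
    · intro i
      have h1 : Wv ≤ ⨅ i, (g k (traj F ξ u₀ w k) (u₀ k) i - cbar i) :=
        le_trans (hkey w hw) (le_trans (min_le_left _ _)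
          (Finset.inf'_le _ (Finset.mem_Icc.2 ⟨Nat.zero_le _, hk⟩)))
      have h2 := le_trans h1 (ciInf_le ((Set.finite_range _).bddBelow) i)
      show cbar i + Wv ≤ _
      linarith
    · intro i
      have h1 : Wv ≤ ⨅ i, (θ (traj F ξ u₀ w (N + 1)) i - cbar i) :=
        le_trans (hkey w hw) (min_le_right _ _)
      have h2 := le_trans h1 (ciInf_le ((Set.finite_range _).bddBelow) i)
      show cbar i + Wv ≤ _
      linarith
  · rintro ⟨c, ⟨u, hu⟩, hlt⟩
    set ε : ℝ := ⨅ i, (c i - cbar i) with hε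
    have hWε : Wv < ε := by
      obtain ⟨i₀, _, hi₀⟩ := Finset.univ.exists_min_image (fun i => c i - cbar i)
        Finset.univ_nonempty
      have h1 : c i₀ - cbar i₀ ≤ ε := le_ciInf fun j => hi₀ j (Finset.mem_univ j)
      have := hlt i₀
      linarith
    have hJ : ε ≤ φ u := by
      rw [hφ_eq]
      refine le_ciInf fun w => ?_
      obtain ⟨h1, h2⟩ := hu w.1 w.2
      refine le_min (Finset.le_inf' _ _ fun k hk => le_ciInf fun i => ?_)
        (le_ciInf fun i => ?_)
      · have hg' := h1 k (Finset.mem_Icc.1 hk).2 i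
        have hε' : ε ≤ c i - cbar i := ciInf_le ((Set.finite_range _).bddBelow) i
        linarith
      · have hθ' := h2 i
        have hε' : ε ≤ c i - cbar i := ciInf_le ((Set.finite_range _).bddBelow) i
        linarith
    have : ε ≤ Wv := le_trans hJ (le_csSup hbdd ⟨u, rfl⟩)
    linarith
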